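/- Let r ≥ 1 and n₀ > n₁ > ⋯ > n_r ≥ 0 be a strictly decreasing sequence of natural numbers. Suppose φ₀, …, φ_{r-1} are real numbers with 2^{n_j} φ_j ≡ π (mod 2π) for j = 0, …, r−1. Then for all real φ: ∏_{j=0}^{r-1} |sin(2^{n_{j+1}−1}(φ − φ₀ − ⋯ − φ_j))| ≥ (1/2^{n₀−n_r}) |cos(2^{n₀−1} φ)|. -/

import Mathlib

open Real Finset

private lemma sin_pow_le (k : ℕ) (α : ℝ) :
    |Real.sin ((2:ℝ) ^ k * α)| ≤ 2 ^ k * |Real.sin α| := by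
  induction k with
  | zero => simp
  | succ k ih =>
    have h : (2:ℝ) ^ (k + 1) * α = 2 * ((2:ℝ) ^ k * α) := by ring
    rw [h, Real.sin_two_mul, abs_mul, abs_mul, abs_two]
    have hc : |Real.cos ((2:ℝ) ^ k * α)| ≤ 1 := Real.abs_cos_le_one _
    have hsn : (0:ℝ) ≤ |Real.sin ((2:ℝ) ^ k * α)| := abs_nonneg _
    have hS : (0:ℝ) ≤ |Real.sin α| := abs_nonneg _
    have hp : (0:ℝ) < 2 ^ k := by positivity
    have h1 : |Real.sin ((2:ℝ) ^ k * α)| * |Real.cos ((2:ℝ) ^ k * α)| ≤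
        |Real.sin ((2:ℝ) ^ k * α)| := mul_le_of_le_one_right hsn hc
    have h2 : (2:ℝ) ^ (k + 1) = 2 * 2 ^ k := by ring
    rw [h2]
    linarith [ih]

private lemma abs_cos_eq_abs_sin (N : ℕ) (ψ θ : ℝ) (m : ℤ)
    (h : (2:ℝ) ^ N * ψ = π + 2 * π * m) :
    |Real.cos ((2:ℝ) ^ ((N:ℤ) - 1) * θ)| =
      |Real.sin ((2:ℝ) ^ ((N:ℤ) - 1) * (θ - ψ))| := by
  have h2 : (2:ℝ) ≠ 0 := by norm_num
  have hψ : (2:ℝ) ^ ((N:ℤ) - 1) * ψ = π / 2 + m * π := by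
    have : (2:ℝ) ^ ((N:ℤ) - 1) = (2:ℝ) ^ N / 2 := by
      rw [zpow_sub₀ h2, zpow_natCast, zpow_one]
    rw [this]
    field_simp
    linarith [h]
  have key : (2:ℝ) ^ ((N:ℤ) - 1) * θ =
      ((2:ℝ) ^ ((N:ℤ) - 1) * (θ - ψ) + π / 2) + m * π := by
    rw [mul_sub]; linarith [hψ]
  rw [key, Real.cos_add_int_mul_pi, Real.cos_add_pi_div_two, abs_mul, abs_neg]
  have : |((-1:ℝ)) ^ m| = 1 := by
    rcases Int.even_or_odd m with he | ho
    · rw [he.neg_one_zpow]; simp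
    · rw [Odd.neg_one_zpow ho]; simp
  rw [this, one_mul]

/-- The key step inequality combining the two lemmas. -/
private lemma step_ineq (a b : ℕ) (hab : b < a) (ψ θ : ℝ) (m : ℤ)
    (h : (2:ℝ) ^ a * ψ = π + 2 * π * m) :
    |Real.cos ((2:ℝ) ^ ((a:ℤ) - 1) * θ)| ≤
      2 ^ (a - b) * |Real.sin ((2:ℝ) ^ ((b:ℤ) - 1) * (θ - ψ))| := by
  rw [abs_cos_eq_abs_sin a ψ θ m h]
  have h2 : (2:ℝ) ≠ 0 := by norm_num
  have hcast : ((a - b : ℕ) : ℤ) = (a:ℤ) - b := by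
    omega
  have hsplit : (2:ℝ) ^ ((a:ℤ) - 1) * (θ - ψ) =
      (2:ℝ) ^ (a - b) * ((2:ℝ) ^ ((b:ℤ) - 1) * (θ - ψ)) := by
    rw [← mul_assoc, ← zpow_natCast (2:ℝ) (a - b), ← zpow_add₀ h2, hcast]
    ring_nf
  rw [hsplit]
  exact sin_pow_le (a - b) _

theorem trig_product_lower_bound (r : ℕ) (hr : 1 ≤ r) (n : ℕ → ℕ)
    (hdec : ∀ j, j < r → n (j + 1) < n j)
    (φ : ℕ → ℝ)
    (hφ : ∀ j, j < r → ∃ m : ℤ, (2 : ℝ) ^ n j * φ j = π + 2 * π * m)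
    (x : ℝ) :
    (1 / 2 ^ (n 0 - n r)) * |Real.cos ((2 : ℝ) ^ ((n 0 : ℤ) - 1) * x)| ≤
      ∏ j ∈ range r,
        |Real.sin ((2 : ℝ) ^ ((n (j + 1) : ℤ) - 1) *
          (x - ∑ i ∈ range (j + 1), φ i))| := by
  induction r generalizing n φ x with
  | zero => omega
  | succ r ih =>
    rcases Nat.eq_zero_or_pos r with hr0 | hrpos
    · subst hr0
      -- base case r = 1
      obtain ⟨m, hm⟩ := hφ 0 (by norm_num)
      have hstep := step_ineq (n 0) (n 1) (hdec 0 (by norm_num)) (φ 0) x m hm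
      simp only [zero_add, Finset.prod_range_one, Finset.sum_range_one]
      rw [div_mul_eq_mul_div, one_mul, div_le_iff₀ (by positivity)]
      linarith [hstep]
    · -- inductive step
      have hdec' : ∀ j, j < r → n (j + 1 + 1) < n (j + 1) :=
        fun j hj => hdec (j + 1) (by omega)
      have hφ' : ∀ j, j < r → ∃ m : ℤ, (2:ℝ) ^ n (j + 1) * φ (j + 1) = π + 2 * π * m :=
        fun j hj => hφ (j + 1) (by omega)
      have IH := ih hrpos (fun j => n (j + 1)) hdec' (fun j => φ (j + 1)) hφ' (x - φ 0)
      -- rewrite the product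
      have hprod : ∏ j ∈ range (r + 1),
          |Real.sin ((2:ℝ) ^ ((n (j + 1) : ℤ) - 1) * (x - ∑ i ∈ range (j + 1), φ i))|
          = |Real.sin ((2:ℝ) ^ ((n 1 : ℤ) - 1) * (x - φ 0))| *
            ∏ j ∈ range r,
              |Real.sin ((2:ℝ) ^ ((n (j + 1 + 1) : ℤ) - 1) *
                ((x - φ 0) - ∑ i ∈ range (j + 1), φ (i + 1)))| := by
        rw [Finset.prod_range_succ', mul_comm]
        congr 1
        · norm_num
        · refine Finset.prod_congr rfl fun j _ => ?_
          have hsum : x - ∑ i ∈ range (j + 1 + 1), φ i =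
              (x - φ 0) - ∑ i ∈ range (j + 1), φ (i + 1) := by
            rw [Finset.sum_range_succ']; ring
          rw [hsum]
      rw [hprod]
      -- abbreviations
      set s := |Real.sin ((2:ℝ) ^ ((n 1 : ℤ) - 1) * (x - φ 0))| with hs
      set P := ∏ j ∈ range r,
              |Real.sin ((2:ℝ) ^ ((n (j + 1 + 1) : ℤ) - 1) *
                ((x - φ 0) - ∑ i ∈ range (j + 1), φ (i + 1)))| with hP
      have hs0 : 0 ≤ s := abs_nonneg _
      have hIH : (1 / 2 ^ (n 1 - n (r + 1))) *
          |Real.cos ((2:ℝ) ^ ((n 1 : ℤ) - 1) * (x - φ 0))| ≤ P := IH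
      -- combine
      have key : (1 / 2 ^ (n 0 - n (r + 1))) * |Real.cos ((2:ℝ) ^ ((n 0 : ℤ) - 1) * x)|
          ≤ s * ((1 / 2 ^ (n 1 - n (r + 1))) *
            |Real.cos ((2:ℝ) ^ ((n 1 : ℤ) - 1) * (x - φ 0))|) := by
        obtain ⟨m, hm⟩ := hφ 0 (by omega)
        have h01 : n 1 < n 0 := hdec 0 (by omega)
        have h1r : n (r + 1) ≤ n 1 := by
          have : ∀ k, k + 1 ≤ r + 1 → n (k + 1) ≤ n 1 := by
            intro k
            induction k with
            | zero => intro _; exact le_refl _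
            | succ k ihk =>
              intro hk
              have h1 := hdec (k + 1) (by omega)
              have h2 := ihk (by omega)
              omega
          exact this r (le_refl _)
        have h2 : (2:ℝ) ≠ 0 := by norm_num
        set S1 := |Real.sin ((2:ℝ) ^ (n 1 : ℤ) * (x - φ 0))| with hS1
        set c := |Real.cos ((2:ℝ) ^ ((n 1 : ℤ) - 1) * (x - φ 0))| with hc1
        -- cos to sin
        have hc : |Real.cos ((2:ℝ) ^ ((n 0 : ℤ) - 1) * x)| =
            |Real.sin ((2:ℝ) ^ ((n 0 : ℤ) - 1) * (x - φ 0))| :=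
          abs_cos_eq_abs_sin (n 0) (φ 0) x m hm
        -- halving bound
        have hbound : |Real.sin ((2:ℝ) ^ ((n 0 : ℤ) - 1) * (x - φ 0))| ≤
            2 ^ (n 0 - 1 - n 1) * S1 := by
          have hsplit : (2:ℝ) ^ ((n 0 : ℤ) - 1) * (x - φ 0) =
              (2:ℝ) ^ (n 0 - 1 - n 1) * ((2:ℝ) ^ (n 1 : ℤ) * (x - φ 0)) := by
            rw [← mul_assoc, ← zpow_natCast (2:ℝ) (n 0 - 1 - n 1), ← zpow_add₀ h2]
            congr 2
            omega
          rw [hsplit, hS1]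
          exact sin_pow_le _ _
        -- s * c = S1 / 2
        have hsc : s * c = S1 / 2 := by
          have hdbl : (2:ℝ) ^ (n 1 : ℤ) * (x - φ 0) =
              2 * ((2:ℝ) ^ ((n 1 : ℤ) - 1) * (x - φ 0)) := by
            rw [← mul_assoc, ← zpow_one_add₀ h2]
            congr 2
            omega
          rw [hS1, hdbl, Real.sin_two_mul, abs_mul, abs_mul, hs, hc1]
          rw [abs_of_nonneg (by norm_num : (0:ℝ) ≤ 2)]
          ring
        have hpow : (2:ℝ) ^ (n 0 - n (r + 1)) =
            2 ^ (n 0 - 1 - n 1) * 2 * 2 ^ (n 1 - n (r + 1)) := by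
          rw [mul_assoc, ← pow_succ', ← pow_add]
          congr 1
          omega
        have hrhs : s * ((1 / 2 ^ (n 1 - n (r + 1))) * c) = (S1 / 2) * (1 / 2 ^ (n 1 - n (r + 1))) := by
          rw [← hsc]; ring
        rw [hrhs, hc]
        calc (1 / 2 ^ (n 0 - n (r + 1))) * |Real.sin ((2:ℝ) ^ ((n 0 : ℤ) - 1) * (x - φ 0))|
            ≤ (1 / 2 ^ (n 0 - n (r + 1))) * (2 ^ (n 0 - 1 - n 1) * S1) := by
              apply mul_le_mul_of_nonneg_left hbound (by positivity)
          _ = (S1 / 2) * (1 / 2 ^ (n 1 - n (r + 1))) := by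
              rw [hpow]; field_simp
      calc (1 / 2 ^ (n 0 - n (r + 1))) * |Real.cos ((2:ℝ) ^ ((n 0 : ℤ) - 1) * x)|
          ≤ s * ((1 / 2 ^ (n 1 - n (r + 1))) *
            |Real.cos ((2:ℝ) ^ ((n 1 : ℤ) - 1) * (x - φ 0))|) := key
        _ ≤ s * P := by
            apply mul_le_mul_of_nonneg_left hIH hs0
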